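/- Let C ≠ 0 be real and N ≥ 0 an integer. Suppose the boundary data of the Goursat problem ∂²k/∂s∂t = C·k on [a,b]×[c,d] are polynomials k(s,c) = ∑_{n=0}^N g_n (s−a)^n and k(a,t) = ∑_{n=0}^N h_n (t−c)^n with g_0 = h_0. Then the function k(s,t) = g_0·I₀(2√(C(s−a)(t−c))) + ∑_{n=1}^N (g_n (s−a)^n + h_n (t−c)^n)·₀F₁(n+1; C(s−a)(t−c)) solves the PDE on the rectangle and matches the boundary data, where ₀F₁(a;z) = ∑_{m≥0} z^m/((a)_m m!) and I₀(2√z) is interpreted as ∑_{m≥0} z^m/(m!)² (valid also for negative z). -/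

import Mathlib

open Set

noncomputable def phiG (n : ℕ) (z : ℝ) : ℝ :=
  ∑' m : ℕ, z ^ m / ((Nat.ascFactorial (n + 1) m : ℝ) * m.factorial)

lemma asc_cast_pos (n m : ℕ) : (0:ℝ) < (Nat.ascFactorial (n + 1) m : ℝ) := by
  exact_mod_cast Nat.ascFactorial_pos n m

lemma asc_bot (n m : ℕ) :
    Nat.ascFactorial (n + 1) (m + 1) = (n + 1) * Nat.ascFactorial (n + 2) m := by
  have h := Nat.succ_ascFactorial (n + 1) m
  rw [Nat.ascFactorial_succ, ← h]

lemma asc_ge_one (n m : ℕ) : (1:ℝ) ≤ (Nat.ascFactorial (n + 1) m : ℝ) := by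
  exact_mod_cast Nat.ascFactorial_pos n m

lemma fact_cast_pos (m : ℕ) : (0:ℝ) < (m.factorial : ℝ) := by
  exact_mod_cast m.factorial_pos

lemma summable_phiG (n : ℕ) (z : ℝ) :
    Summable (fun m : ℕ => z ^ m / ((Nat.ascFactorial (n + 1) m : ℝ) * m.factorial)) := by
  apply Summable.of_norm_bounded (Real.summable_pow_div_factorial |z|)
  intro m
  have h1 := fact_cast_pos m
  have h2 := asc_ge_one n m
  have h3 := asc_cast_pos n m
  rw [Real.norm_eq_abs, abs_div, abs_pow, abs_of_pos (mul_pos h3 h1)]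
  have h4 : (m.factorial : ℝ) ≤ (Nat.ascFactorial (n + 1) m : ℝ) * m.factorial := by nlinarith
  exact div_le_div_of_nonneg_left (by positivity) h1 h4

lemma summable_deriv_bound (n : ℕ) (R : ℝ) :
    Summable (fun m : ℕ => (m : ℝ) * R ^ (m - 1) / ((Nat.ascFactorial (n + 1) m : ℝ) * m.factorial)) := by
  rw [← summable_nat_add_iff 1]
  apply Summable.of_norm_bounded (Real.summable_pow_div_factorial |R|)
  intro m
  have h1 := fact_cast_pos m
  have h2 := asc_ge_one n (m + 1)
  have h3 := asc_cast_pos n (m + 1)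
  have hf : ((m + 1).factorial : ℝ) = ((m : ℝ) + 1) * m.factorial := by
    push_cast [Nat.factorial_succ]; ring
  rw [Real.norm_eq_abs, abs_div, abs_mul, abs_of_pos (mul_pos h3 (fact_cast_pos (m+1))), abs_pow]
  have hnum : |((m:ℝ)+1)| = ((m:ℝ)+1) := abs_of_pos (by positivity)
  push_cast
  rw [hnum, hf]
  have key : ((m:ℝ)+1) * |R| ^ m / ((Nat.ascFactorial (n + 1) (m+1) : ℝ) * (((m : ℝ) + 1) * m.factorial))
      ≤ ((m:ℝ)+1) * |R| ^ m / (1 * (((m : ℝ) + 1) * m.factorial)) := by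
    apply div_le_div_of_nonneg_left (by positivity) (by positivity)
    have := asc_ge_one n (m+1)
    nlinarith [pow_nonneg (abs_nonneg R) m]
  calc ((m:ℝ)+1) * |R| ^ m / ((Nat.ascFactorial (n + 1) (m+1) : ℝ) * (((m : ℝ) + 1) * m.factorial))
      ≤ ((m:ℝ)+1) * |R| ^ m / (1 * (((m : ℝ) + 1) * m.factorial)) := key
    _ = |R| ^ m / m.factorial := by field_simp

lemma phiG_hasDerivAt (n : ℕ) (z : ℝ) :
    HasDerivAt (phiG n) (phiG (n + 1) z / ((n : ℝ) + 1)) z := by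
  set R : ℝ := |z| + 1 with hR
  have hzR : z ∈ Metric.ball (0:ℝ) R := by
    simp only [Metric.mem_ball, dist_zero_right, Real.norm_eq_abs]
    linarith [abs_nonneg z]
  have main : HasDerivAt (fun y => ∑' m : ℕ, y ^ m / ((Nat.ascFactorial (n + 1) m : ℝ) * m.factorial))
      (∑' m : ℕ, (m : ℝ) * z ^ (m - 1) / ((Nat.ascFactorial (n + 1) m : ℝ) * m.factorial)) z := by
    apply hasDerivAt_tsum_of_isPreconnected (summable_deriv_bound n R)
      Metric.isOpen_ball (convex_ball (0:ℝ) R).isPreconnected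
      (g := fun m y => y ^ m / ((Nat.ascFactorial (n + 1) m : ℝ) * m.factorial))
      (g' := fun m y => (m : ℝ) * y ^ (m - 1) / ((Nat.ascFactorial (n + 1) m : ℝ) * m.factorial))
      ?_ ?_ hzR (summable_phiG n z) hzR
    · intro m y _
      exact (hasDerivAt_pow m y).div_const _
    · intro m y hy
      simp only [Metric.mem_ball, Real.norm_eq_abs, dist_zero_right] at hy ⊢
      rw [abs_div, abs_mul, abs_of_pos (mul_pos (asc_cast_pos n m) (fact_cast_pos m)),
        Nat.abs_cast, abs_pow]
      gcongr <;> first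
        | exact abs_nonneg y
        | linarith [abs_nonneg z]
  have hsum : (∑' m : ℕ, (m : ℝ) * z ^ (m - 1) / ((Nat.ascFactorial (n + 1) m : ℝ) * m.factorial))
      = phiG (n + 1) z / ((n : ℝ) + 1) := by
    have h1 : HasSum (fun m : ℕ => z ^ m / ((Nat.ascFactorial (n + 2) m : ℝ) * m.factorial) / ((n:ℝ)+1))
        (phiG (n + 1) z / ((n : ℝ) + 1)) := (summable_phiG (n+1) z).hasSum.div_const _
    have h2 : ∀ m : ℕ, ((m:ℝ)+1) * z ^ m / ((Nat.ascFactorial (n + 1) (m+1) : ℝ) * (m+1).factorial)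
        = z ^ m / ((Nat.ascFactorial (n + 2) m : ℝ) * m.factorial) / ((n:ℝ)+1) := by
      intro m
      have e1 : (Nat.ascFactorial (n + 1) (m+1) : ℝ) = ((n:ℝ)+1) * (Nat.ascFactorial (n + 2) m : ℝ) := by
        rw [asc_bot]; push_cast; ring
      have e2 : ((m+1).factorial : ℝ) = ((m:ℝ)+1) * m.factorial := by
        push_cast [Nat.factorial_succ]; ring
      rw [e1, e2]
      have := asc_cast_pos (n+1) m
      have := fact_cast_pos m
      have hm1 : ((m:ℝ)+1) ≠ 0 := by positivity
      field_simp
    set f : ℕ → ℝ := fun j : ℕ => (j : ℝ) * z ^ (j - 1) / ((Nat.ascFactorial (n + 1) j : ℝ) * j.factorial) with hf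
    have h3 : HasSum (fun m : ℕ => f (m + 1)) (phiG (n + 1) z / ((n : ℝ) + 1)) := by
      have : (fun m : ℕ => f (m + 1)) = fun m : ℕ =>
          z ^ m / ((Nat.ascFactorial (n + 2) m : ℝ) * m.factorial) / ((n:ℝ)+1) := by
        funext m
        simp only [hf, Nat.add_sub_cancel]
        push_cast
        exact h2 m
      rw [this]
      exact h1
    have h4 : HasSum f (phiG (n + 1) z / ((n : ℝ) + 1) + ∑ i ∈ Finset.range 1, f i) :=
      (hasSum_nat_add_iff 1).mp h3
    have h5 : ∑ i ∈ Finset.range 1, f i = 0 := by simp [hf]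
    rw [h5, add_zero] at h4
    exact h4.tsum_eq
  rw [← hsum]
  exact main

lemma phiG_at_zero (n : ℕ) : phiG n 0 = 1 := by
  unfold phiG
  rw [tsum_eq_single 0]
  · simp
  · intro m hm
    rw [zero_pow hm, zero_div]

lemma phiG_identity (n : ℕ) (z : ℝ) :
    phiG n z = phiG (n + 1) z + z * phiG (n + 2) z / (((n : ℝ) + 1) * ((n : ℝ) + 2)) := by
  set t : ℕ → ℝ := fun m => z ^ m / ((Nat.ascFactorial (n + 1) m : ℝ) * m.factorial) with ht
  set A : ℕ → ℝ := fun m => z ^ m / ((Nat.ascFactorial (n + 2) m : ℝ) * m.factorial) with hA'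
  set B : ℕ → ℝ := fun m =>
    z * (z ^ m / ((Nat.ascFactorial (n + 3) m : ℝ) * m.factorial)) / (((n : ℝ) + 1) * ((n : ℝ) + 2)) with hB'
  have hA : HasSum A (phiG (n + 1) z) := (summable_phiG (n + 1) z).hasSum
  have hAs : HasSum (fun m : ℕ => A (m + 1)) (phiG (n + 1) z - 1) := by
    have := (hasSum_nat_add_iff' (f := A) 1).mpr hA
    simpa [hA'] using this
  have hB : HasSum B (z * phiG (n + 2) z / (((n : ℝ) + 1) * ((n : ℝ) + 2))) := by
    exact
      (((summable_phiG (n + 2) z).hasSum.mul_left z).div_const (((n : ℝ) + 1) * ((n : ℝ) + 2)))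
  have hterm : ∀ m : ℕ, t (m + 1) = A (m + 1) + B m := by
    intro m
    have e1 : (Nat.ascFactorial (n + 1) (m + 1) : ℝ) = ((n : ℝ) + 1) * (Nat.ascFactorial (n + 2) m : ℝ) := by
      rw [asc_bot]; push_cast; ring
    have e2 : (Nat.ascFactorial (n + 2) (m + 1) : ℝ) = ((n : ℝ) + 2) * (Nat.ascFactorial (n + 3) m : ℝ) := by
      have := asc_bot (n + 1) m
      rw [show n + 1 + 1 = n + 2 by rfl, show n + 1 + 2 = n + 3 by rfl] at this
      rw [this]; push_cast; ring
    have e3 : ((m + 1).factorial : ℝ) = ((m : ℝ) + 1) * m.factorial := by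
      push_cast [Nat.factorial_succ]; ring
    have hrel : ((n : ℝ) + 2) * (Nat.ascFactorial (n + 3) m : ℝ)
        = ((n : ℝ) + 2 + m) * (Nat.ascFactorial (n + 2) m : ℝ) := by
      have := Nat.succ_ascFactorial (n + 2) m
      have h2 : (n + 2) * Nat.ascFactorial (n + 3) m = (n + 2 + m) * Nat.ascFactorial (n + 2) m := this
      exact_mod_cast h2
    simp only [ht, hA', hB', e1, e2, e3]
    have p1 : (0:ℝ) < (Nat.ascFactorial (n + 2) m : ℝ) := asc_cast_pos (n + 1) m
    have p2 : (0:ℝ) < (Nat.ascFactorial (n + 3) m : ℝ) := asc_cast_pos (n + 2) m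
    have p3 := fact_cast_pos m
    have p4 : ((n:ℝ) + 1) > 0 := by positivity
    have p5 : ((n:ℝ) + 2) > 0 := by positivity
    have p6 : ((m:ℝ) + 1) > 0 := by positivity
    have hP : ((Nat.ascFactorial (n + 3) m : ℝ)) =
        ((n : ℝ) + 2 + m) * (Nat.ascFactorial (n + 2) m : ℝ) / ((n : ℝ) + 2) := by
      rw [eq_div_iff (by positivity)]; linarith [hrel]
    rw [hP]
    field_simp
    ring
  have hC : HasSum (fun m : ℕ => t (m + 1))
      (phiG (n + 1) z - 1 + z * phiG (n + 2) z / (((n : ℝ) + 1) * ((n : ℝ) + 2))) :=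
    (hAs.add hB).congr_fun hterm
  have hD := (hasSum_nat_add_iff (f := t) 1).mp hC
  have ht0 : ∑ i ∈ Finset.range 1, t i = 1 := by simp [ht]
  rw [ht0] at hD
  have : phiG n z = ∑' m, t m := rfl
  rw [this, hD.tsum_eq]
  ring

theorem goursat_polynomial_boundary_solution
    (C a b c d : ℝ) (hC : C ≠ 0) (hab : a < b) (hcd : c < d)
    (N : ℕ) (g h : ℕ → ℝ) (hgh : g 0 = h 0)
    (k : ℝ → ℝ → ℝ)
    (hk : ∀ s t : ℝ, k s t =
      g 0 * (∑' m : ℕ, (C * (s - a) * (t - c)) ^ m / ((m.factorial : ℝ)) ^ 2) +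
      ∑ n ∈ Finset.Icc 1 N,
        (g n * (s - a) ^ n + h n * (t - c) ^ n) *
          ∑' m : ℕ, (C * (s - a) * (t - c)) ^ m /
            ((Nat.ascFactorial (n + 1) m : ℝ) * (m.factorial : ℝ))) :
    (∀ s ∈ Icc a b, ∀ t ∈ Icc c d,
        deriv (fun s' => deriv (fun t' => k s' t') t) s = C * k s t) ∧
    (∀ s ∈ Icc a b, k s c = ∑ n ∈ Finset.range (N + 1), g n * (s - a) ^ n) ∧
    (∀ t ∈ Icc c d, k a t = ∑ n ∈ Finset.range (N + 1), h n * (t - c) ^ n) := by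
  -- rewrite k in terms of phiG
  have e0 : ∀ w : ℝ, (∑' m : ℕ, w ^ m / ((m.factorial : ℝ)) ^ 2) = phiG 0 w := by
    intro w
    unfold phiG
    congr 1 with m
    rw [Nat.one_ascFactorial, sq]
  have k_eq : ∀ s t : ℝ, k s t =
      g 0 * phiG 0 (C * (s - a) * (t - c)) +
      ∑ n ∈ Finset.Icc 1 N, (g n * (s - a) ^ n + h n * (t - c) ^ n) *
        phiG n (C * (s - a) * (t - c)) := by
    intro s t
    rw [hk s t, e0]
    rfl
  have hsplit : ∀ (f : ℕ → ℝ), ∑ n ∈ Finset.range (N + 1), f n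
      = f 0 + ∑ n ∈ Finset.Icc 1 N, f n := by
    intro f
    rw [Finset.range_eq_Ico, Finset.sum_eq_sum_Ico_succ_bot (Nat.succ_pos N),
      Nat.succ_eq_add_one, Finset.Ico_add_one_right_eq_Icc]
  have wT : ∀ (s' t' : ℝ) (j : ℕ), HasDerivAt (fun u : ℝ => phiG j (C * (s' - a) * (u - c)))
      (phiG (j + 1) (C * (s' - a) * (t' - c)) / ((j : ℝ) + 1) * (C * (s' - a))) t' := by
    intro s' t' j
    have h1 : HasDerivAt (fun u : ℝ => C * (s' - a) * (u - c)) (C * (s' - a)) t' := by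
      simpa using ((hasDerivAt_id t').sub_const c).const_mul (C * (s' - a))
    have := (phiG_hasDerivAt j (C * (s' - a) * (t' - c))).comp t' h1
    exact this
  have wS : ∀ (s' t' : ℝ) (j : ℕ), HasDerivAt (fun v : ℝ => phiG j (C * (v - a) * (t' - c)))
      (phiG (j + 1) (C * (s' - a) * (t' - c)) / ((j : ℝ) + 1) * (C * (t' - c))) s' := by
    intro s' t' j
    have h1 : HasDerivAt (fun v : ℝ => C * (v - a) * (t' - c)) (C * (t' - c)) s' := by
      have := (((hasDerivAt_id s').sub_const a).const_mul C).mul_const (t' - c)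
      simpa using this
    have := (phiG_hasDerivAt j (C * (s' - a) * (t' - c))).comp s' h1
    exact this
  set D1 : ℝ → ℝ → ℝ := fun s' t' =>
    g 0 * (phiG (0 + 1) (C * (s' - a) * (t' - c)) / (((0 : ℕ) : ℝ) + 1) * (C * (s' - a))) +
    ∑ n ∈ Finset.Icc 1 N,
      (h n * ((n : ℝ) * (t' - c) ^ (n - 1) * 1) * phiG n (C * (s' - a) * (t' - c)) +
       (g n * (s' - a) ^ n + h n * (t' - c) ^ n) *
         (phiG (n + 1) (C * (s' - a) * (t' - c)) / ((n : ℝ) + 1) * (C * (s' - a)))) with hD1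
  have stepA : ∀ s' t' : ℝ, HasDerivAt (fun u => k s' u) (D1 s' t') t' := by
    intro s' t'
    have hfe : (fun u => k s' u) = fun u =>
        g 0 * phiG 0 (C * (s' - a) * (u - c)) +
        ∑ n ∈ Finset.Icc 1 N, (g n * (s' - a) ^ n + h n * (u - c) ^ n) *
          phiG n (C * (s' - a) * (u - c)) := funext fun u => k_eq s' u
    rw [hfe]
    simp only [hD1]
    apply HasDerivAt.add
    · exact (wT s' t' 0).const_mul (g 0)
    · apply HasDerivAt.fun_sum
      intro n hn
      exact (((((hasDerivAt_id t').sub_const c).pow n).const_mul (h n)).const_add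
          (g n * (s' - a) ^ n)).mul (wT s' t' n)
  refine ⟨?_, ?_, ?_⟩
  · intro s _ t _
    have hswap : (fun s' => deriv (fun t' => k s' t') t) = fun s' => D1 s' t :=
      funext fun s' => (stepA s' t).deriv
    rw [hswap]
    have stepB : HasDerivAt (fun s' => D1 s' t) (C * k s t) s := by
      have H0 := (((wS s t (0 + 1)).div_const (((0 : ℕ) : ℝ) + 1)).mul
        (((hasDerivAt_id s).sub_const a).const_mul C)).const_mul (g 0)
      have Hn : ∀ n, HasDerivAt (fun s' =>
          h n * ((n : ℝ) * (t - c) ^ (n - 1) * 1) * phiG n (C * (s' - a) * (t - c)) +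
          (g n * (s' - a) ^ n + h n * (t - c) ^ n) *
            (phiG (n + 1) (C * (s' - a) * (t - c)) / ((n : ℝ) + 1) * (C * (s' - a))))
          (h n * ((n : ℝ) * (t - c) ^ (n - 1) * 1) *
              (phiG (n + 1) (C * (s - a) * (t - c)) / ((n : ℝ) + 1) * (C * (t - c))) +
           (g n * ((n : ℝ) * (s - a) ^ (n - 1) * 1) *
              (phiG (n + 1) (C * (s - a) * (t - c)) / ((n : ℝ) + 1) * (C * (s - a))) +
            (g n * (s - a) ^ n + h n * (t - c) ^ n) *
              (phiG (n + 1 + 1) (C * (s - a) * (t - c)) / (((n + 1 : ℕ) : ℝ) + 1) * (C * (t - c)) /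
                  ((n : ℝ) + 1) * (C * (s - a)) +
               phiG (n + 1) (C * (s - a) * (t - c)) / ((n : ℝ) + 1) * (C * 1)))) s := by
        intro n
        exact ((wS s t n).const_mul (h n * ((n : ℝ) * (t - c) ^ (n - 1) * 1))).add
          ((((((hasDerivAt_id s).sub_const a).pow n).const_mul (g n)).add_const
              (h n * (t - c) ^ n)).mul
            (((wS s t (n + 1)).div_const ((n : ℝ) + 1)).mul
              (((hasDerivAt_id s).sub_const a).const_mul C)))
      have H := H0.add (HasDerivAt.fun_sum (u := Finset.Icc 1 N) (fun n _ => Hn n))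
      simp only [hD1]
      convert H using 1
      case e'_4 => rfl
      case e'_5 => rfl
      case e'_8 => rfl
      rw [k_eq s t, mul_add, Finset.mul_sum]
      congr 1
      · rw [phiG_identity 0 (C * (s - a) * (t - c))]
        norm_num
        ring
      · apply Finset.sum_congr rfl
        intro n hn
        obtain ⟨m, rfl⟩ : ∃ m, n = m + 1 := by
          simp only [Finset.mem_Icc] at hn
          exact ⟨n - 1, by omega⟩
        rw [phiG_identity (m + 1) (C * (s - a) * (t - c))]
        have hidx : m + 1 + 1 + 1 = m + 1 + 2 := rfl
        rw [hidx]
        simp only [Nat.add_sub_cancel]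
        push_cast
        have hne : ((m : ℝ) + 1) + 1 ≠ 0 := by positivity
        have hne2 : ((m : ℝ) + 1) + 2 ≠ 0 := by positivity
        field_simp
        ring
    exact stepB.deriv
  · intro s _
    rw [k_eq s c, hsplit (fun n => g n * (s - a) ^ n)]
    simp only [sub_self, mul_zero, phiG_at_zero, mul_one, pow_zero]
    congr 1
    apply Finset.sum_congr rfl
    intro n hn
    have hn' : n ≠ 0 := by
      simp only [Finset.mem_Icc] at hn; omega
    rw [zero_pow hn', mul_zero, add_zero]
  · intro t _
    rw [k_eq a t, hsplit (fun n => h n * (t - c) ^ n)]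
    simp only [sub_self, mul_zero, zero_mul, phiG_at_zero, mul_one, pow_zero, hgh]
    congr 1
    apply Finset.sum_congr rfl
    intro n hn
    have hn' : n ≠ 0 := by
      simp only [Finset.mem_Icc] at hn; omega
    rw [zero_pow hn', mul_zero, zero_add]
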